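/- Let n ≥ 1 be an integer and ν > n/2 a real number. Then there exists a constant C > 0, depending only on n and ν, such that for every R > 0, all points q₁, q₂ ∈ ℝⁿ, and every measurable set A ⊆ {x ∈ ℝⁿ : |x−q₁| ≥ R and |x−q₂| ≥ R}, one has ∫_A |x−q₁|^{−ν} · |x−q₂|^{−ν} dx ≤ C · R^{n−2ν}. -/

import Mathlib

open MeasureTheory

open MeasureTheory Real Set Metric ENNReal

/-- One-center lintegral bound over the exterior of a ball. -/
lemma stmt13_key (n : ℕ) (hn : 1 ≤ n) (ν : ℝ) (hν : (n : ℝ) / 2 < ν) :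
    ∃ K : ℝ≥0∞, K ≠ ⊤ ∧ ∀ R : ℝ, 0 < R → ∀ q : EuclideanSpace ℝ (Fin n),
      (∫⁻ x in {x | R ≤ ‖x - q‖}, ENNReal.ofReal (‖x - q‖ ^ (-(2 * ν)))) ≤
        K * ENNReal.ofReal (R ^ ((n : ℝ) - 2 * ν)) := by
  have hνpos : 0 < ν := lt_of_le_of_lt (by positivity) hν
  have hexp : (n : ℝ) - 2 * ν < 0 := by linarith [(div_lt_iff₀ (by norm_num : (0:ℝ) < 2)).mp hν]
  set r : ℝ≥0∞ := ENNReal.ofReal ((2:ℝ) ^ ((n : ℝ) - 2 * ν)) with hr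
  have hr1 : r < 1 := by
    rw [hr, ← ENNReal.ofReal_one]
    exact ENNReal.ofReal_lt_ofReal_iff (by norm_num) |>.2
      (Real.rpow_lt_one_of_one_lt_of_neg (by norm_num) hexp)
  refine ⟨ENNReal.ofReal ((2:ℝ) ^ (n : ℝ)) * volume (ball (0 : EuclideanSpace ℝ (Fin n)) 1)
    * (1 - r)⁻¹, ?_, ?_⟩
  · refine ENNReal.mul_ne_top (ENNReal.mul_ne_top ENNReal.ofReal_ne_top
      measure_ball_lt_top.ne) ?_
    rw [ENNReal.inv_ne_top]
    simp only [ne_eq, tsub_eq_zero_iff_le, not_le]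
    exact hr1
  intro R hR q
  set A : ℕ → Set (EuclideanSpace ℝ (Fin n)) :=
    fun k => {x | R * (2:ℝ) ^ (k:ℝ) ≤ ‖x - q‖ ∧ ‖x - q‖ ≤ R * (2:ℝ) ^ ((k:ℝ) + 1)} with hA
  have hcover : {x : EuclideanSpace ℝ (Fin n) | R ≤ ‖x - q‖} ⊆ ⋃ k, A k := by
    intro x hx
    have ht : (1:ℝ) ≤ ‖x - q‖ / R := (one_le_div hR).2 hx
    have htpos : (0:ℝ) < ‖x - q‖ / R := lt_of_lt_of_le one_pos ht
    set k := ⌊Real.logb 2 (‖x - q‖ / R)⌋₊ with hk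
    have hlog0 : 0 ≤ Real.logb 2 (‖x - q‖ / R) := Real.logb_nonneg (by norm_num) ht
    have h1 : (2:ℝ) ^ (k:ℝ) ≤ ‖x - q‖ / R := by
      calc (2:ℝ) ^ (k:ℝ) ≤ (2:ℝ) ^ (Real.logb 2 (‖x - q‖ / R)) :=
            Real.rpow_le_rpow_of_exponent_le (by norm_num) (Nat.floor_le hlog0)
        _ = ‖x - q‖ / R := Real.rpow_logb (by norm_num) (by norm_num) htpos
    have h2 : ‖x - q‖ / R ≤ (2:ℝ) ^ ((k:ℝ) + 1) := by
      calc ‖x - q‖ / R = (2:ℝ) ^ (Real.logb 2 (‖x - q‖ / R)) :=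
            (Real.rpow_logb (by norm_num) (by norm_num) htpos).symm
        _ ≤ (2:ℝ) ^ ((k:ℝ) + 1) :=
            Real.rpow_le_rpow_of_exponent_le (by norm_num) (Nat.lt_floor_add_one _).le
    refine Set.mem_iUnion.2 ⟨k, ?_, ?_⟩
    · calc R * (2:ℝ) ^ (k:ℝ) ≤ R * (‖x - q‖ / R) :=
            mul_le_mul_of_nonneg_left h1 hR.le
        _ = ‖x - q‖ := by field_simp
    · calc ‖x - q‖ = R * (‖x - q‖ / R) := by field_simp
        _ ≤ R * (2:ℝ) ^ ((k:ℝ) + 1) := mul_le_mul_of_nonneg_left h2 hR.le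
  have hterm : ∀ k : ℕ, (∫⁻ x in A k, ENNReal.ofReal (‖x - q‖ ^ (-(2 * ν)))) ≤
      ENNReal.ofReal (R ^ ((n : ℝ) - 2 * ν)) * (r ^ k *
        (ENNReal.ofReal ((2:ℝ) ^ (n : ℝ)) * volume (ball (0 : EuclideanSpace ℝ (Fin n)) 1))) := by
    intro k
    have hRk : (0:ℝ) < R * (2:ℝ) ^ (k:ℝ) := by positivity
    have hstep1 : (∫⁻ x in A k, ENNReal.ofReal (‖x - q‖ ^ (-(2 * ν)))) ≤
        ENNReal.ofReal ((R * (2:ℝ) ^ (k:ℝ)) ^ (-(2 * ν))) * volume (A k) := by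
      rw [← setLIntegral_const]
      refine setLIntegral_mono measurable_const fun x hx => ?_
      exact ENNReal.ofReal_le_ofReal
        (Real.rpow_le_rpow_of_nonpos hRk hx.1 (by linarith))
    have hsub : A k ⊆ closedBall q (R * (2:ℝ) ^ ((k:ℝ) + 1)) := by
      intro x hx
      rw [mem_closedBall, dist_eq_norm]
      exact hx.2
    have hvol : volume (A k) ≤
        ENNReal.ofReal ((R * (2:ℝ) ^ ((k:ℝ) + 1)) ^ n)
          * volume (ball (0 : EuclideanSpace ℝ (Fin n)) 1) := by
      calc volume (A k) ≤ volume (closedBall q (R * (2:ℝ) ^ ((k:ℝ) + 1))) :=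
            measure_mono hsub
        _ = _ := by
            rw [MeasureTheory.Measure.addHaar_closedBall volume q (by positivity)]
            rw [finrank_euclideanSpace_fin]
    have hrealeq : (R * (2:ℝ) ^ (k:ℝ)) ^ (-(2 * ν)) * (R * (2:ℝ) ^ ((k:ℝ) + 1)) ^ (n:ℕ) =
        R ^ ((n : ℝ) - 2 * ν) * (((2:ℝ) ^ ((n : ℝ) - 2 * ν)) ^ k * (2:ℝ) ^ (n : ℝ)) := by
      rw [← Real.rpow_natCast (R * (2:ℝ) ^ ((k:ℝ) + 1)) n]
      rw [Real.mul_rpow hR.le (by positivity), Real.mul_rpow hR.le (by positivity)]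
      rw [← Real.rpow_natCast ((2:ℝ) ^ ((n : ℝ) - 2 * ν)) k]
      rw [← Real.rpow_mul (by norm_num : (0:ℝ) ≤ 2), ← Real.rpow_mul (by norm_num : (0:ℝ) ≤ 2),
        ← Real.rpow_mul (by norm_num : (0:ℝ) ≤ 2)]
      rw [mul_mul_mul_comm, ← Real.rpow_add hR, ← Real.rpow_add (by norm_num : (0:ℝ) < 2),
        ← Real.rpow_add (by norm_num : (0:ℝ) < 2)]
      ring_nf
    calc (∫⁻ x in A k, ENNReal.ofReal (‖x - q‖ ^ (-(2 * ν))))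
        ≤ ENNReal.ofReal ((R * (2:ℝ) ^ (k:ℝ)) ^ (-(2 * ν))) * volume (A k) := hstep1
      _ ≤ ENNReal.ofReal ((R * (2:ℝ) ^ (k:ℝ)) ^ (-(2 * ν))) *
          (ENNReal.ofReal ((R * (2:ℝ) ^ ((k:ℝ) + 1)) ^ n)
            * volume (ball (0 : EuclideanSpace ℝ (Fin n)) 1)) :=
          mul_le_mul_right hvol _
      _ = ENNReal.ofReal ((R * (2:ℝ) ^ (k:ℝ)) ^ (-(2 * ν)) * (R * (2:ℝ) ^ ((k:ℝ) + 1)) ^ n)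
            * volume (ball (0 : EuclideanSpace ℝ (Fin n)) 1) := by
          rw [ENNReal.ofReal_mul (by positivity), mul_assoc]
      _ = _ := by
          rw [hrealeq, ENNReal.ofReal_mul (by positivity),
            ENNReal.ofReal_mul (by positivity), ENNReal.ofReal_pow (by positivity)]
          rw [hr]
          ring
  calc (∫⁻ x in {x | R ≤ ‖x - q‖}, ENNReal.ofReal (‖x - q‖ ^ (-(2 * ν))))
      ≤ ∫⁻ x in ⋃ k, A k, ENNReal.ofReal (‖x - q‖ ^ (-(2 * ν))) :=
        lintegral_mono_set hcover
    _ ≤ ∑' k, ∫⁻ x in A k, ENNReal.ofReal (‖x - q‖ ^ (-(2 * ν))) :=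
        lintegral_iUnion_le _ _
    _ ≤ ∑' k, ENNReal.ofReal (R ^ ((n : ℝ) - 2 * ν)) * (r ^ k *
          (ENNReal.ofReal ((2:ℝ) ^ (n : ℝ)) * volume (ball (0 : EuclideanSpace ℝ (Fin n)) 1))) :=
        ENNReal.tsum_le_tsum hterm
    _ = ENNReal.ofReal ((2:ℝ) ^ (n : ℝ)) * volume (ball (0 : EuclideanSpace ℝ (Fin n)) 1)
          * (1 - r)⁻¹ * ENNReal.ofReal (R ^ ((n : ℝ) - 2 * ν)) := by
        rw [ENNReal.tsum_mul_left, ENNReal.tsum_mul_right, ENNReal.tsum_geometric]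
        ring

theorem stmt13 (n : ℕ) (hn : 1 ≤ n) (ν : ℝ) (hν : (n : ℝ) / 2 < ν) :
    ∃ C : ℝ, 0 < C ∧ ∀ R : ℝ, 0 < R → ∀ q₁ q₂ : EuclideanSpace ℝ (Fin n),
      ∀ A : Set (EuclideanSpace ℝ (Fin n)), MeasurableSet A →
        A ⊆ {x | R ≤ ‖x - q₁‖ ∧ R ≤ ‖x - q₂‖} →
        (∫ x in A, ‖x - q₁‖ ^ (-ν) * ‖x - q₂‖ ^ (-ν)) ≤ C * R ^ ((n : ℝ) - 2 * ν) := by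
  obtain ⟨K, hKtop, hK⟩ := stmt13_key n hn ν hν
  refine ⟨(2 * K).toReal + 1, by positivity, ?_⟩
  intro R hR q₁ q₂ A hAmeas hAsub
  have hνpos : 0 < ν := lt_of_le_of_lt (by positivity) hν
  set f : EuclideanSpace ℝ (Fin n) → ℝ := fun x => ‖x - q₁‖ ^ (-ν) * ‖x - q₂‖ ^ (-ν) with hf
  have hf0 : ∀ x, 0 ≤ f x := fun x => by positivity
  have hfm : Measurable f := by
    apply Measurable.mul <;> · fun_prop
  set g₁ : EuclideanSpace ℝ (Fin n) → ℝ≥0∞ :=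
    fun x => ENNReal.ofReal (‖x - q₁‖ ^ (-(2 * ν))) with hg₁
  set g₂ : EuclideanSpace ℝ (Fin n) → ℝ≥0∞ :=
    fun x => ENNReal.ofReal (‖x - q₂‖ ^ (-(2 * ν))) with hg₂
  have hg₁m : Measurable g₁ := by fun_prop
  have hg₂m : Measurable g₂ := by fun_prop
  -- pointwise bound on A
  have hpt : ∀ x ∈ A, ENNReal.ofReal (f x) ≤ g₁ x + g₂ x := by
    intro x hx
    obtain ⟨h1, h2⟩ := hAsub hx
    have ha : (0:ℝ) < ‖x - q₁‖ := lt_of_lt_of_le hR h1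
    have hb : (0:ℝ) < ‖x - q₂‖ := lt_of_lt_of_le hR h2
    have hsq1 : ‖x - q₁‖ ^ (-ν) * ‖x - q₁‖ ^ (-ν) = ‖x - q₁‖ ^ (-(2 * ν)) := by
      rw [← Real.rpow_add ha]; ring_nf
    have hsq2 : ‖x - q₂‖ ^ (-ν) * ‖x - q₂‖ ^ (-ν) = ‖x - q₂‖ ^ (-(2 * ν)) := by
      rw [← Real.rpow_add hb]; ring_nf
    have hle : f x ≤ ‖x - q₁‖ ^ (-(2 * ν)) + ‖x - q₂‖ ^ (-(2 * ν)) := by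
      rw [← hsq1, ← hsq2]
      show ‖x - q₁‖ ^ (-ν) * ‖x - q₂‖ ^ (-ν) ≤ _
      have hu : (0:ℝ) ≤ ‖x - q₁‖ ^ (-ν) := Real.rpow_nonneg (norm_nonneg _) _
      have hv : (0:ℝ) ≤ ‖x - q₂‖ ^ (-ν) := Real.rpow_nonneg (norm_nonneg _) _
      nlinarith [sq_nonneg (‖x - q₁‖ ^ (-ν) - ‖x - q₂‖ ^ (-ν)), mul_nonneg hu hv]
    calc ENNReal.ofReal (f x) ≤
        ENNReal.ofReal (‖x - q₁‖ ^ (-(2 * ν)) + ‖x - q₂‖ ^ (-(2 * ν))) :=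
          ENNReal.ofReal_le_ofReal hle
      _ = g₁ x + g₂ x :=
          ENNReal.ofReal_add (Real.rpow_nonneg (norm_nonneg _) _)
            (Real.rpow_nonneg (norm_nonneg _) _)
  set X : ℝ≥0∞ := ENNReal.ofReal (R ^ ((n : ℝ) - 2 * ν)) with hX
  have hL : (∫⁻ x in A, ENNReal.ofReal (f x)) ≤ 2 * K * X := by
    calc (∫⁻ x in A, ENNReal.ofReal (f x)) ≤ ∫⁻ x in A, (g₁ x + g₂ x) :=
          setLIntegral_mono (hg₁m.add hg₂m) hpt
      _ = (∫⁻ x in A, g₁ x) + ∫⁻ x in A, g₂ x := lintegral_add_left hg₁m _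
      _ ≤ (∫⁻ x in {x | R ≤ ‖x - q₁‖}, g₁ x) + ∫⁻ x in {x | R ≤ ‖x - q₂‖}, g₂ x := by
          gcongr
          · exact fun x hx => (hAsub hx).1
          · exact fun x hx => (hAsub hx).2
      _ ≤ K * X + K * X := add_le_add (hK R hR q₁) (hK R hR q₂)
      _ = 2 * K * X := by ring
  have hXtop : X ≠ ⊤ := ENNReal.ofReal_ne_top
  have h2KX : 2 * K * X ≠ ⊤ := by
    exact ENNReal.mul_ne_top (ENNReal.mul_ne_top (by norm_num) hKtop) hXtop
  have hint : IntegrableOn f A := by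
    refine ⟨hfm.aestronglyMeasurable, ?_⟩
    rw [hasFiniteIntegral_iff_ofReal (Filter.Eventually.of_forall hf0)]
    exact lt_of_le_of_lt hL (lt_top_iff_ne_top.2 h2KX)
  have heq : (∫ x in A, f x) = (∫⁻ x in A, ENNReal.ofReal (f x)).toReal :=
    integral_eq_lintegral_of_nonneg_ae (Filter.Eventually.of_forall hf0)
      hfm.aestronglyMeasurable
  rw [heq]
  calc (∫⁻ x in A, ENNReal.ofReal (f x)).toReal ≤ (2 * K * X).toReal :=
        ENNReal.toReal_mono h2KX hL
    _ = (2 * K).toReal * R ^ ((n : ℝ) - 2 * ν) := by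
        rw [ENNReal.toReal_mul, hX, ENNReal.toReal_ofReal (Real.rpow_nonneg hR.le _)]
    _ ≤ ((2 * K).toReal + 1) * R ^ ((n : ℝ) - 2 * ν) := by
        have : (0:ℝ) ≤ R ^ ((n : ℝ) - 2 * ν) := Real.rpow_nonneg hR.le _
        nlinarith
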